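/- Let A be an m×n matrix, T an index set with |T| = k, and T_d disjoint from T with |T_d| ≤ S. Assume δ_S + δ_k + θ_{k,S}² < 1. Let c be any vector supported on T_d. Then the vector w̃ := M A_{T_d} (A_{T_d}ᵀ M A_{T_d})^{-1} c_{T_d}, where M = I - A_T(A_Tᵀ A_T)^{-1} A_Tᵀ, satisfies A_jᵀ w̃ = 0 for all j ∈ T, A_jᵀ w̃ = c_j for all j ∈ T_d, and ‖w̃‖₂ ≤ (√(1+δ_S) / (1 - δ_S - θ_{S,k}²/(1-δ_k))) ‖c‖₂. -/

import Mathlib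

open Matrix BigOperators Finset

noncomputable def cols {m n : ℕ} (A : Matrix (Fin m) (Fin n) ℝ) (T : Finset (Fin n)) :
    Matrix (Fin m) {j // j ∈ T} ℝ :=
  Matrix.of fun i j => A i j.1

noncomputable def l2 {ι : Type*} [Fintype ι] (v : ι → ℝ) : ℝ :=
  Real.sqrt (∑ i, v i ^ 2)

/-- `δ` is a valid `S`-restricted-isometry bound for `A`. -/
def RIPBound {m n : ℕ} (A : Matrix (Fin m) (Fin n) ℝ) (S : ℕ) (δ : ℝ) : Prop :=
  ∀ T : Finset (Fin n), T.card ≤ S → ∀ c : {j // j ∈ T} → ℝ,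
    (1 - δ) * (∑ j, c j ^ 2) ≤ (∑ i, ((cols A T).mulVec c i) ^ 2) ∧
    (∑ i, ((cols A T).mulVec c i) ^ 2) ≤ (1 + δ) * (∑ j, c j ^ 2)

/-- The `S`-restricted isometry constant `δ_S(A)`: the smallest valid RIP bound. -/
noncomputable def ripConst {m n : ℕ} (A : Matrix (Fin m) (Fin n) ℝ) (S : ℕ) : ℝ :=
  sInf {δ : ℝ | 0 ≤ δ ∧ RIPBound A S δ}

/-- `θ` is a valid `(S₁,S₂)`-restricted-orthogonality bound for `A`. -/
def ROCBound {m n : ℕ} (A : Matrix (Fin m) (Fin n) ℝ) (S₁ S₂ : ℕ) (θ : ℝ) : Prop :=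
  ∀ T₁ T₂ : Finset (Fin n), Disjoint T₁ T₂ → T₁.card ≤ S₁ → T₂.card ≤ S₂ →
    ∀ c₁ : {j // j ∈ T₁} → ℝ, ∀ c₂ : {j // j ∈ T₂} → ℝ,
      |∑ i, (cols A T₁).mulVec c₁ i * (cols A T₂).mulVec c₂ i| ≤ θ * l2 c₁ * l2 c₂

/-- The restricted orthogonality constant `θ_{S₁,S₂}(A)`. -/
noncomputable def rocConst {m n : ℕ} (A : Matrix (Fin m) (Fin n) ℝ) (S₁ S₂ : ℕ) : ℝ :=
  sInf {θ : ℝ | 0 ≤ θ ∧ ROCBound A S₁ S₂ θ}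

/-- `a_k(S, Š)` from Modified-CS. -/
noncomputable def aConst {m n : ℕ} (A : Matrix (Fin m) (Fin n) ℝ) (k S S' : ℕ) : ℝ :=
  (rocConst A S' S + rocConst A S' k * rocConst A S k / (1 - ripConst A k)) /
    (1 - ripConst A S - (rocConst A S k) ^ 2 / (1 - ripConst A k))

/-- `M = I - A_T (A_Tᵀ A_T)⁻¹ A_Tᵀ`, projection onto orthogonal complement of span of `A_T`. -/
noncomputable def projM {m n : ℕ} (A : Matrix (Fin m) (Fin n) ℝ) (T : Finset (Fin n)) :
    Matrix (Fin m) (Fin m) ℝ :=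
  1 - cols A T * ((cols A T)ᵀ * cols A T)⁻¹ * (cols A T)ᵀ


lemma sumsq_nonneg {ι : Type*} [Fintype ι] (v : ι → ℝ) : 0 ≤ ∑ i, v i ^ 2 :=
  Finset.sum_nonneg fun i _ => sq_nonneg _
lemma l2_nonneg {ι : Type*} [Fintype ι] (v : ι → ℝ) : 0 ≤ l2 v := Real.sqrt_nonneg _
lemma l2_sq {ι : Type*} [Fintype ι] (v : ι → ℝ) : l2 v ^ 2 = ∑ i, v i ^ 2 :=
  Real.sq_sqrt (sumsq_nonneg v)
lemma sumsq_pos {ι : Type*} [Fintype ι] {v : ι → ℝ} (hv : v ≠ 0) : 0 < ∑ i, v i ^ 2 := by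
  rcases (sumsq_nonneg v).lt_or_eq with h | h
  · exact h
  · exfalso; apply hv; funext i
    have := (Finset.sum_eq_zero_iff_of_nonneg (fun i _ => sq_nonneg (v i))).1 h.symm i
      (Finset.mem_univ i)
    exact pow_eq_zero_iff (n := 2) (by norm_num) |>.1 this
lemma dot_mulVec_eq {l o : Type*} [Fintype l] [Fintype o] (B : Matrix l o ℝ) (v : l → ℝ)
    (w : o → ℝ) : v ⬝ᵥ B *ᵥ w = Bᵀ *ᵥ v ⬝ᵥ w := by
  rw [Matrix.dotProduct_mulVec, Matrix.mulVec_transpose]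
lemma dot_self_eq_sumsq {ι : Type*} [Fintype ι] (v : ι → ℝ) : v ⬝ᵥ v = ∑ i, v i ^ 2 := by
  simp [dotProduct, sq]
lemma dot_le_l2_mul_l2 {ι : Type*} [Fintype ι] (u v : ι → ℝ) :
    u ⬝ᵥ v ≤ l2 u * l2 v := by
  have h := Finset.sum_mul_sq_le_sq_mul_sq Finset.univ u v
  calc u ⬝ᵥ v ≤ |∑ i, u i * v i| := le_abs_self _
    _ = Real.sqrt ((∑ i, u i * v i) ^ 2) := (Real.sqrt_sq_eq_abs _).symm
    _ ≤ Real.sqrt ((∑ i, u i ^ 2) * ∑ i, v i ^ 2) := Real.sqrt_le_sqrt h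
    _ = l2 u * l2 v := Real.sqrt_mul (sumsq_nonneg u) _

lemma Fhelp {m n : ℕ} (A : Matrix (Fin m) (Fin n) ℝ) (T : Finset (Fin n))
    (c : {j // j ∈ T} → ℝ) :
    ∑ i, ((cols A T).mulVec c i) ^ 2 ≤ (∑ i, ∑ j, A i j ^ 2) * ∑ j, c j ^ 2 := by
  have hs := sumsq_nonneg c
  have key : ∀ i, ((cols A T).mulVec c i) ^ 2 ≤ (∑ j, A i j ^ 2) * ∑ j, c j ^ 2 := by
    intro i
    have h := Finset.sum_mul_sq_le_sq_mul_sq Finset.univ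
      (fun j : {j // j ∈ T} => A i j.1) c
    have hle : (∑ j : {j // j ∈ T}, A i j.1 ^ 2) ≤ ∑ j, A i j ^ 2 := by
      rw [Finset.sum_coe_sort T (fun j => A i j ^ 2)]
      exact Finset.sum_le_sum_of_subset_of_nonneg (Finset.subset_univ T)
        (fun _ _ _ => sq_nonneg _)
    have hmv : ((cols A T).mulVec c i) ^ 2 = (∑ j : {j // j ∈ T}, A i j.1 * c j) ^ 2 := by
      simp [Matrix.mulVec, dotProduct, cols]
    rw [hmv]
    exact h.trans (mul_le_mul_of_nonneg_right hle hs)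
  calc ∑ i, ((cols A T).mulVec c i) ^ 2 ≤ ∑ i, (∑ j, A i j ^ 2) * ∑ j, c j ^ 2 :=
        Finset.sum_le_sum fun i _ => key i
    _ = (∑ i, ∑ j, A i j ^ 2) * ∑ j, c j ^ 2 := by rw [Finset.sum_mul]

lemma ripSet_nonempty {m n : ℕ} (A : Matrix (Fin m) (Fin n) ℝ) (S : ℕ) :
    {δ : ℝ | 0 ≤ δ ∧ RIPBound A S δ}.Nonempty := by
  set F := ∑ i, ∑ j, A i j ^ 2 with hF
  have hF0 : (0:ℝ) ≤ F := Finset.sum_nonneg fun i _ => sumsq_nonneg _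
  refine ⟨1 + F, by linarith, ?_⟩
  intro T hT c
  have hs := sumsq_nonneg c
  have hup := Fhelp A T c
  rw [← hF] at hup
  constructor
  · have := sumsq_nonneg ((cols A T).mulVec c); nlinarith
  · nlinarith

lemma ripConst_mem {m n : ℕ} (A : Matrix (Fin m) (Fin n) ℝ) (S : ℕ) :
    0 ≤ ripConst A S ∧ RIPBound A S (ripConst A S) := by
  have hne := ripSet_nonempty A S
  have hbdd : BddBelow {δ : ℝ | 0 ≤ δ ∧ RIPBound A S δ} := ⟨0, fun δ hδ => hδ.1⟩
  have h0 : 0 ≤ ripConst A S := le_csInf hne fun δ hδ => hδ.1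
  refine ⟨h0, ?_⟩
  intro T hT c
  set L := ∑ j, c j ^ 2 with hL
  set R := ∑ i, ((cols A T).mulVec c i) ^ 2 with hR
  have hL0 : 0 ≤ L := sumsq_nonneg c
  have hR0 : 0 ≤ R := sumsq_nonneg _
  have key : ∀ ε > (0:ℝ), (1 - ripConst A S) * L ≤ R + ε * L ∧ R ≤ (1 + ripConst A S) * L + ε * L := by
    intro ε hε
    obtain ⟨δ, ⟨_, hδB⟩, hδlt⟩ := Real.lt_sInf_add_pos hne hε
    have hδlt' : δ < ripConst A S + ε := hδlt
    obtain ⟨h1, h2⟩ := hδB T hT c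
    rw [← hL] at h1 h2; rw [← hR] at h1 h2
    constructor
    · nlinarith [hδlt', h1, hL0]
    · nlinarith [hδlt', h2, hL0]
  rcases hL0.eq_or_lt with h | h
  · constructor
    · rw [← h] at *; simpa using hR0
    · have := (key 1 one_pos).2; rw [← h] at this ⊢; linarith
  constructor
  · have : ∀ ε > (0:ℝ), (1 - ripConst A S) * L ≤ R + ε := by
      intro ε hε
      have := (key (ε / L) (by positivity)).1
      rw [div_mul_cancel₀ _ h.ne'] at this; exact this
    exact le_of_forall_pos_le_add this
  · have : ∀ ε > (0:ℝ), R ≤ (1 + ripConst A S) * L + ε := by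
      intro ε hε
      have := (key (ε / L) (by positivity)).2
      rw [div_mul_cancel₀ _ h.ne'] at this; exact this
    exact le_of_forall_pos_le_add this

lemma rocSet_nonempty {m n : ℕ} (A : Matrix (Fin m) (Fin n) ℝ) (S₁ S₂ : ℕ) :
    {θ : ℝ | 0 ≤ θ ∧ ROCBound A S₁ S₂ θ}.Nonempty := by
  set F := ∑ i, ∑ j, A i j ^ 2 with hF
  have hF0 : (0:ℝ) ≤ F := Finset.sum_nonneg fun i _ => sumsq_nonneg _
  refine ⟨F, hF0, ?_⟩
  intro T₁ T₂ _ _ _ c₁ c₂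
  have cs : |∑ i, (cols A T₁).mulVec c₁ i * (cols A T₂).mulVec c₂ i| ≤
      l2 ((cols A T₁).mulVec c₁) * l2 ((cols A T₂).mulVec c₂) := by
    have h := Finset.sum_mul_sq_le_sq_mul_sq Finset.univ
      ((cols A T₁).mulVec c₁) ((cols A T₂).mulVec c₂)
    rw [← Real.sqrt_sq_eq_abs]
    calc Real.sqrt ((∑ i, (cols A T₁).mulVec c₁ i * (cols A T₂).mulVec c₂ i) ^ 2)
        ≤ Real.sqrt ((∑ i, ((cols A T₁).mulVec c₁ i) ^ 2) * ∑ i, ((cols A T₂).mulVec c₂ i) ^ 2) :=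
          Real.sqrt_le_sqrt h
      _ = _ := Real.sqrt_mul (sumsq_nonneg _) _
  have b1 : l2 ((cols A T₁).mulVec c₁) ≤ Real.sqrt F * l2 c₁ := by
    rw [l2, l2, ← Real.sqrt_mul hF0]
    exact Real.sqrt_le_sqrt (Fhelp A T₁ c₁)
  have b2 : l2 ((cols A T₂).mulVec c₂) ≤ Real.sqrt F * l2 c₂ := by
    rw [l2, l2, ← Real.sqrt_mul hF0]
    exact Real.sqrt_le_sqrt (Fhelp A T₂ c₂)
  calc |∑ i, (cols A T₁).mulVec c₁ i * (cols A T₂).mulVec c₂ i|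
      ≤ l2 ((cols A T₁).mulVec c₁) * l2 ((cols A T₂).mulVec c₂) := cs
    _ ≤ (Real.sqrt F * l2 c₁) * (Real.sqrt F * l2 c₂) := by
        apply mul_le_mul b1 b2 (l2_nonneg _) (mul_nonneg (Real.sqrt_nonneg _) (l2_nonneg _))
    _ = (Real.sqrt F * Real.sqrt F) * l2 c₁ * l2 c₂ := by ring
    _ = F * l2 c₁ * l2 c₂ := by rw [Real.mul_self_sqrt hF0]

lemma rocConst_mem {m n : ℕ} (A : Matrix (Fin m) (Fin n) ℝ) (S₁ S₂ : ℕ) :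
    0 ≤ rocConst A S₁ S₂ ∧ ROCBound A S₁ S₂ (rocConst A S₁ S₂) := by
  have hne := rocSet_nonempty A S₁ S₂
  have h0 : 0 ≤ rocConst A S₁ S₂ := le_csInf hne fun θ hθ => hθ.1
  refine ⟨h0, ?_⟩
  intro T₁ T₂ hdis h1 h2 c₁ c₂
  set L := l2 c₁ * l2 c₂ with hLdef
  have hL0 : 0 ≤ L := mul_nonneg (l2_nonneg _) (l2_nonneg _)
  have key : ∀ ε > (0:ℝ), |∑ i, (cols A T₁).mulVec c₁ i * (cols A T₂).mulVec c₂ i|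
      ≤ rocConst A S₁ S₂ * l2 c₁ * l2 c₂ + ε * L := by
    intro ε hε
    obtain ⟨θ, ⟨_, hθB⟩, hθlt⟩ := Real.lt_sInf_add_pos hne hε
    have hθlt' : θ < rocConst A S₁ S₂ + ε := hθlt
    have hthis := hθB T₁ T₂ hdis h1 h2 c₁ c₂
    have habs : (0:ℝ) ≤ |∑ i, (cols A T₁).mulVec c₁ i * (cols A T₂).mulVec c₂ i| := abs_nonneg _
    have hgoal : θ * l2 c₁ * l2 c₂ ≤ rocConst A S₁ S₂ * l2 c₁ * l2 c₂ + ε * L := by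
      rw [hLdef]; nlinarith [hθlt', hL0, mul_nonneg (l2_nonneg c₁) (l2_nonneg c₂)]
    exact hthis.trans hgoal
  rcases hL0.eq_or_lt with h | h
  · have := key 1 one_pos
    rw [← h] at this; rw [hLdef] at h
    nlinarith [this]
  · have : ∀ ε > (0:ℝ), |∑ i, (cols A T₁).mulVec c₁ i * (cols A T₂).mulVec c₂ i|
        ≤ rocConst A S₁ S₂ * l2 c₁ * l2 c₂ + ε := by
      intro ε hε
      have := key (ε / L) (by positivity)
      rw [div_mul_cancel₀ _ h.ne'] at this; exact this
    exact le_of_forall_pos_le_add this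

lemma rocConst_comm {m n : ℕ} (A : Matrix (Fin m) (Fin n) ℝ) (S₁ S₂ : ℕ) :
    rocConst A S₁ S₂ = rocConst A S₂ S₁ := by
  have hswap : ∀ S₁ S₂ θ, ROCBound A S₁ S₂ θ → ROCBound A S₂ S₁ θ := by
    intro S₁ S₂ θ h T₁ T₂ hdis h1 h2 c₁ c₂
    have := h T₂ T₁ hdis.symm h2 h1 c₂ c₁
    calc |∑ i, (cols A T₁).mulVec c₁ i * (cols A T₂).mulVec c₂ i|
        = |∑ i, (cols A T₂).mulVec c₂ i * (cols A T₁).mulVec c₁ i| := by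
          congr 1; exact Finset.sum_congr rfl fun i _ => mul_comm _ _
      _ ≤ θ * l2 c₂ * l2 c₁ := this
      _ = θ * l2 c₁ * l2 c₂ := by ring
  unfold rocConst
  congr 1
  ext θ
  exact ⟨fun ⟨h0, h⟩ => ⟨h0, hswap _ _ _ h⟩, fun ⟨h0, h⟩ => ⟨h0, hswap _ _ _ h⟩⟩


set_option maxHeartbeats 1000000 in
theorem stmt7 {m n k S : ℕ} (A : Matrix (Fin m) (Fin n) ℝ)
    (T Td : Finset (Fin n)) (hT : T.card = k) (hTd : Td.card ≤ S)
    (hd : Disjoint T Td)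
    (hcond : ripConst A S + ripConst A k + rocConst A k S ^ 2 < 1)
    (c : Fin n → ℝ) (hc : Function.support c ⊆ ↑Td) :
    let w := (projM A T * cols A Td).mulVec
      ((((cols A Td)ᵀ * projM A T * cols A Td)⁻¹).mulVec fun j : {j // j ∈ Td} => c j.1)
    (∀ j ∈ T, (∑ i, A i j * w i) = 0) ∧
    (∀ j ∈ Td, (∑ i, A i j * w i) = c j) ∧
    l2 w ≤ (Real.sqrt (1 + ripConst A S) /
      (1 - ripConst A S - rocConst A S k ^ 2 / (1 - ripConst A k))) * l2 c := by
  intro w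
  have hw : w = (projM A T * cols A Td).mulVec
      ((((cols A Td)ᵀ * projM A T * cols A Td)⁻¹).mulVec fun j : {j // j ∈ Td} => c j.1) := rfl
  obtain ⟨hδS0, hRS⟩ := ripConst_mem A S
  obtain ⟨hδk0, hRk⟩ := ripConst_mem A k
  obtain ⟨hθ0, hRO⟩ := rocConst_mem A k S
  have hθsym : rocConst A S k = rocConst A k S := rocConst_comm A S k
  -- instantiated analytic facts
  have L_Q : ∀ y : {j // j ∈ T} → ℝ,
      (1 - ripConst A k) * (∑ j, y j ^ 2) ≤ ∑ i, ((cols A T).mulVec y i) ^ 2 :=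
    fun y => (hRk T hT.le y).1
  have L_P : ∀ x : {j // j ∈ Td} → ℝ,
      (1 - ripConst A S) * (∑ j, x j ^ 2) ≤ (∑ i, ((cols A Td).mulVec x i) ^ 2) ∧
      (∑ i, ((cols A Td).mulVec x i) ^ 2) ≤ (1 + ripConst A S) * (∑ j, x j ^ 2) :=
    fun x => hRS Td hTd x
  have L_O : ∀ (y : {j // j ∈ T} → ℝ) (x : {j // j ∈ Td} → ℝ),
      |∑ i, (cols A T).mulVec y i * (cols A Td).mulVec x i| ≤ rocConst A k S * l2 y * l2 x :=
    fun y x => hRO T Td hd hT.le hTd y x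
  rw [hθsym]
  set δS := ripConst A S with hδSdef
  set δk := ripConst A k with hδkdef
  set θ := rocConst A k S with hθdef
  have hδk1 : δk < 1 := by nlinarith [sq_nonneg θ]
  have h1k : (0:ℝ) < 1 - δk := by linarith
  have hD : 0 < 1 - δS - θ ^ 2 / (1 - δk) := by
    have h2 : θ ^ 2 / (1 - δk) < 1 - δS := by
      rw [div_lt_iff₀ h1k]
      nlinarith [mul_nonneg hδS0 hδk0]
    linarith
  set D := 1 - δS - θ ^ 2 / (1 - δk) with hDdef
  set Q := cols A T with hQdef
  set P := cols A Td with hPdef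
  set M := projM A T with hMdef
  set G := Qᵀ * Q with hGdef
  set B := Pᵀ * M * P with hBdef
  set cc : {j // j ∈ Td} → ℝ := (fun j => c j.1) with hccdef
  -- G is positive definite hence invertible
  have hGsymT : Gᵀ = G := by
    rw [hGdef]; ext i j
    simp only [Matrix.transpose_apply, Matrix.mul_apply]
    exact Finset.sum_congr rfl fun x _ => mul_comm _ _
  have hQy_sq : ∀ y : {j // j ∈ T} → ℝ, y ⬝ᵥ G *ᵥ y = ∑ i, (Q *ᵥ y) i ^ 2 := by
    intro y
    rw [hGdef, ← Matrix.mulVec_mulVec, dot_mulVec_eq, Matrix.transpose_transpose,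
      dot_self_eq_sumsq]
  have hGpd : G.PosDef := by
    refine Matrix.posDef_iff_dotProduct_mulVec.2 ⟨?_, ?_⟩
    · show Gᴴ = G
      rw [show Gᴴ = Gᵀ by ext i j; simp [Matrix.conjTranspose_apply], hGsymT]
    · intro y hy
      have hys : star y = y := by funext i; simp
      rw [hys, hQy_sq y]
      exact lt_of_lt_of_le (mul_pos h1k (sumsq_pos hy)) (L_Q y)
  have hGdet : IsUnit G.det := (Matrix.isUnit_iff_isUnit_det _).1 hGpd.isUnit
  have hGinv1 : G * G⁻¹ = 1 := Matrix.mul_nonsing_inv _ hGdet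
  have hGinv2 : G⁻¹ * G = 1 := Matrix.nonsing_inv_mul _ hGdet
  have hM : M = 1 - Q * G⁻¹ * Qᵀ := by
    rw [hMdef]; unfold projM; rw [← hQdef, ← hGdef]
  have hQtN : Qᵀ * (Q * G⁻¹ * Qᵀ) = Qᵀ := by
    rw [← Matrix.mul_assoc, ← Matrix.mul_assoc, ← hGdef, hGinv1, Matrix.one_mul]
  have hQtM : Qᵀ * M = 0 := by
    rw [hM, Matrix.mul_sub, Matrix.mul_one, hQtN, sub_self]
  have hMsym : Mᵀ = M := by
    rw [hM, Matrix.transpose_sub, Matrix.transpose_one, Matrix.transpose_mul,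
      Matrix.transpose_mul, Matrix.transpose_transpose, Matrix.transpose_nonsing_inv,
      hGsymT, ← Matrix.mul_assoc]
  have hNN : (Q * G⁻¹ * Qᵀ) * (Q * G⁻¹ * Qᵀ) = Q * G⁻¹ * Qᵀ := by
    rw [Matrix.mul_assoc (Q * G⁻¹), hQtN]
  have hMM : M * M = M := by
    rw [hM, Matrix.sub_mul, Matrix.one_mul, Matrix.mul_sub, Matrix.mul_one, hNN]
    abel
  -- quadratic form facts
  have hQF : ∀ x : {j // j ∈ Td} → ℝ,
      x ⬝ᵥ B *ᵥ x = (∑ i, ((M * P) *ᵥ x) i ^ 2) ∧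
      D * (∑ j, x j ^ 2) ≤ x ⬝ᵥ B *ᵥ x ∧
      x ⬝ᵥ B *ᵥ x ≤ (1 + δS) * (∑ j, x j ^ 2) := by
    intro x
    set u := P *ᵥ x with hu
    set t := Qᵀ *ᵥ u with ht
    set y := G⁻¹ *ᵥ t with hy
    have e1 : x ⬝ᵥ B *ᵥ x = u ⬝ᵥ M *ᵥ u := by
      rw [hBdef, ← Matrix.mulVec_mulVec, ← Matrix.mulVec_mulVec,
        dot_mulVec_eq Pᵀ x (M *ᵥ (P *ᵥ x)), Matrix.transpose_transpose, ← hu]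
    have hNu : (Q * G⁻¹ * Qᵀ) *ᵥ u = Q *ᵥ y := by
      rw [← Matrix.mulVec_mulVec, ← Matrix.mulVec_mulVec, ← ht, ← hy]
    have e2 : u ⬝ᵥ M *ᵥ u = u ⬝ᵥ u - t ⬝ᵥ y := by
      rw [hM, Matrix.sub_mulVec, Matrix.one_mulVec, dotProduct_sub, hNu,
        dot_mulVec_eq Q u y, ← ht]
    have hGy : G *ᵥ y = t := by
      rw [hy, Matrix.mulVec_mulVec, hGinv1, Matrix.one_mulVec]
    have e3 : ∑ i, (Q *ᵥ y) i ^ 2 = t ⬝ᵥ y := by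
      rw [← dot_self_eq_sumsq, dot_mulVec_eq Q (Q *ᵥ y) y, Matrix.mulVec_mulVec,
        ← hGdef, hGy]
    have e4 : t ⬝ᵥ y = (Q *ᵥ y) ⬝ᵥ u := by
      rw [ht, ← dot_mulVec_eq Q u y, dotProduct_comm]
    have hsQy0 : (0:ℝ) ≤ ∑ i, (Q *ᵥ y) i ^ 2 := sumsq_nonneg _
    have hO := L_O y x
    have hdot_eq : ∑ i, (Q *ᵥ y) i * (P *ᵥ x) i = (Q *ᵥ y) ⬝ᵥ u := by rw [← hu]; rfl
    rw [hdot_eq] at hO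
    have hsQy_le : ∑ i, (Q *ᵥ y) i ^ 2 ≤ θ * l2 y * l2 x := by
      rw [e3, e4]
      exact (le_abs_self _).trans hO
    have hLQy := L_Q y
    have hly : l2 y ≤ θ * l2 x / (1 - δk) := by
      rcases (l2_nonneg y).eq_or_lt with h | h
      · rw [← h]
        exact div_nonneg (mul_nonneg hθ0 (l2_nonneg x)) h1k.le
      · rw [le_div_iff₀ h1k]
        have h1 : (1 - δk) * l2 y ^ 2 ≤ θ * l2 y * l2 x := by
          rw [l2_sq]; exact hLQy.trans hsQy_le
        nlinarith
    have hsQyb : ∑ i, (Q *ᵥ y) i ^ 2 ≤ θ ^ 2 / (1 - δk) * (∑ j, x j ^ 2) := by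
      have h1 : θ * l2 y * l2 x ≤ θ * (θ * l2 x / (1 - δk)) * l2 x := by
        have := mul_le_mul_of_nonneg_left hly hθ0
        exact mul_le_mul_of_nonneg_right this (l2_nonneg x)
      have h2 : θ * (θ * l2 x / (1 - δk)) * l2 x = θ ^ 2 / (1 - δk) * l2 x ^ 2 := by
        field_simp
      rw [l2_sq] at h2
      exact hsQy_le.trans (h1.trans_eq h2)
    obtain ⟨hPl, hPu⟩ := L_P x
    rw [← hu] at hPl hPu
    have hsu : u ⬝ᵥ u = ∑ i, u i ^ 2 := dot_self_eq_sumsq u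
    have e5 : x ⬝ᵥ B *ᵥ x = (∑ i, u i ^ 2) - ∑ i, (Q *ᵥ y) i ^ 2 := by
      rw [e1, e2, hsu, e3]
    refine ⟨?_, ?_, ?_⟩
    · -- = sumsq of (M*P) *ᵥ x
      have hMPx : (M * P) *ᵥ x = M *ᵥ u := by rw [← Matrix.mulVec_mulVec, ← hu]
      rw [hMPx, ← dot_self_eq_sumsq, dot_mulVec_eq M (M *ᵥ u) u, Matrix.mulVec_mulVec,
        hMsym, hMM, dotProduct_comm (M *ᵥ u) u, e1]
    · rw [e5, hDdef]
      have hexp : (1 - δS - θ ^ 2 / (1 - δk)) * (∑ j, x j ^ 2) =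
          (1 - δS) * (∑ j, x j ^ 2) - θ ^ 2 / (1 - δk) * (∑ j, x j ^ 2) := by ring
      rw [hexp]
      exact sub_le_sub hPl hsQyb
    · rw [e5]; linarith
  -- B is positive definite hence invertible
  have hBsymT : Bᵀ = B := by
    rw [hBdef, Matrix.transpose_mul, Matrix.transpose_mul, Matrix.transpose_transpose,
      hMsym, ← Matrix.mul_assoc]
  have hBpd : B.PosDef := by
    refine Matrix.posDef_iff_dotProduct_mulVec.2 ⟨?_, ?_⟩
    · show Bᴴ = B
      rw [show Bᴴ = Bᵀ by ext i j; simp [Matrix.conjTranspose_apply], hBsymT]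
    · intro x hx
      have hxs : star x = x := by funext i; simp
      rw [hxs]
      exact lt_of_lt_of_le (mul_pos hD (sumsq_pos hx)) ((hQF x).2.1)
  have hBdet : IsUnit B.det := (Matrix.isUnit_iff_isUnit_det _).1 hBpd.isUnit
  have hBinv1 : B * B⁻¹ = 1 := Matrix.mul_nonsing_inv _ hBdet
  set x₀ := B⁻¹ *ᵥ cc with hx₀
  have hw2 : w = (M * P) *ᵥ x₀ := hw
  have hBx₀ : B *ᵥ x₀ = cc := by
    rw [hx₀, Matrix.mulVec_mulVec, hBinv1, Matrix.one_mulVec]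
  refine ⟨?_, ?_, ?_⟩
  · -- orthogonality to columns in T
    intro j hj
    have hQw : Qᵀ *ᵥ w = 0 := by
      rw [hw2, Matrix.mulVec_mulVec, ← Matrix.mul_assoc, hQtM, Matrix.zero_mul,
        Matrix.zero_mulVec]
    have : (Qᵀ *ᵥ w) ⟨j, hj⟩ = ∑ i, A i j * w i := by
      simp [Matrix.mulVec, dotProduct, hQdef, cols, Matrix.transpose_apply, Matrix.of_apply]
    rw [← this, hQw]; rfl
  · -- reproduces c on Td
    intro j hj
    have hPw : Pᵀ *ᵥ w = cc := by
      rw [hw2, Matrix.mulVec_mulVec, ← Matrix.mul_assoc, ← hBdef, hBx₀]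
    have : (Pᵀ *ᵥ w) ⟨j, hj⟩ = ∑ i, A i j * w i := by
      simp [Matrix.mulVec, dotProduct, hPdef, cols, Matrix.transpose_apply, Matrix.of_apply]
    rw [← this, hPw]
  · -- norm bound
    have hl2cc : l2 cc = l2 c := by
      unfold l2
      congr 1
      rw [hccdef]
      rw [Finset.sum_coe_sort Td (fun j => c j ^ 2)]
      apply Finset.sum_subset (Finset.subset_univ Td)
      intro x _ hx
      have hcx : c x = 0 := by
        by_contra h
        exact hx (hc (Function.mem_support.2 h))
      rw [hcx]; norm_num
    obtain ⟨hqf_eq, hqf_low, hqf_up⟩ := hQF x₀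
    have hdotc : x₀ ⬝ᵥ B *ᵥ x₀ = x₀ ⬝ᵥ cc := by rw [hBx₀]
    have hcs : x₀ ⬝ᵥ cc ≤ l2 x₀ * l2 cc := dot_le_l2_mul_l2 _ _
    have hlx₀ : l2 x₀ ≤ l2 cc / D := by
      rcases (l2_nonneg x₀).eq_or_lt with h | h
      · rw [← h]
        exact div_nonneg (l2_nonneg cc) hD.le
      · rw [le_div_iff₀ hD]
        have h1 : D * l2 x₀ ^ 2 ≤ l2 x₀ * l2 cc := by
          rw [l2_sq]
          calc D * (∑ j, x₀ j ^ 2) ≤ x₀ ⬝ᵥ B *ᵥ x₀ := hqf_low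
            _ = x₀ ⬝ᵥ cc := hdotc
            _ ≤ l2 x₀ * l2 cc := hcs
        nlinarith
    have hsw : ∑ i, w i ^ 2 ≤ (1 + δS) * (∑ j, x₀ j ^ 2) := by
      rw [hw2, ← hqf_eq]; exact hqf_up
    have h1δS : (0:ℝ) ≤ 1 + δS := by linarith
    have hlw : l2 w ≤ Real.sqrt (1 + δS) * l2 x₀ := by
      unfold l2
      rw [← Real.sqrt_mul h1δS]
      apply Real.sqrt_le_sqrt
      calc ∑ i, w i ^ 2 ≤ (1 + δS) * (∑ j, x₀ j ^ 2) := hsw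
        _ = (1 + δS) * ∑ j, x₀ j ^ 2 := rfl
    calc l2 w ≤ Real.sqrt (1 + δS) * l2 x₀ := hlw
      _ ≤ Real.sqrt (1 + δS) * (l2 cc / D) :=
          mul_le_mul_of_nonneg_left hlx₀ (Real.sqrt_nonneg _)
      _ = (Real.sqrt (1 + δS) / D) * l2 cc := by ring
      _ = (Real.sqrt (1 + δS) / D) * l2 c := by rw [hl2cc]
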